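/- arXiv:1911.05335 — 4 statements merged into one kernel-verified Lean document; each statement's English description precedes it below -/
import Mathlib

section
/- If D is a derivation on a commutative ring R of prime characteristic p, then the p-fold composition D^p is again a derivation on R. -/
theorem iter_leibniz {R : Type*} [CommRing R]
    (D : R → R)
    (hadd : ∀ a b : R, D (a + b) = D a + D b)
    (hleib : ∀ a b : R, D (a * b) = a * D b + D a * b)
    (n : ℕ) (a b : R) :
    D^[n] (a * b) = ∑ k ∈ Finset.range (n + 1),
      n.choose k • (D^[k] a * D^[n - k] b) := by
  set Dh : R →+ R := AddMonoidHom.mk' D hadd with hDh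
  have hD : ∀ x, Dh x = D x := fun x => rfl
  induction n with
  | zero => simp
  | succ n ih =>
    have key : D^[n+1] (a * b) = D (D^[n] (a*b)) := Function.iterate_succ_apply' D n _
    rw [key, ih, ← hD, map_sum]
    have step : ∀ k, Dh (n.choose k • (D^[k] a * D^[n - k] b)) =
        n.choose k • (D^[k] a * D^[n + 1 - k] b) + n.choose k • (D^[k+1] a * D^[n - k] b) := by
      intro k
      rw [map_nsmul, hD, hleib, smul_add]
      by_cases hk : k ≤ n
      · rw [show n + 1 - k = (n - k) + 1 by omega, Function.iterate_succ_apply' D (n-k),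
          Function.iterate_succ_apply' D k]
      · have hc : n.choose k = 0 := Nat.choose_eq_zero_of_lt (by omega)
        simp [hc]
    rw [Finset.sum_congr rfl (fun k _ => step k), Finset.sum_add_distrib]
    -- split first LHS sum at k = 0
    rw [Finset.sum_range_succ' (fun k => n.choose k • (D^[k] a * D^[n + 1 - k] b)) n]
    -- split RHS at k = 0
    rw [Finset.sum_range_succ' (fun k => (n+1).choose k • (D^[k] a * D^[n + 1 - k] b)) (n+1)]
    simp only [Nat.choose_succ_succ, add_smul, Nat.choose_zero_right, one_smul,
      Nat.sub_zero, Function.iterate_zero_apply, Finset.sum_add_distrib]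
    -- extend the range-n sum on LHS to range (n+1) (extra term has choose n (n+1) = 0)
    have h3 : ∑ k ∈ Finset.range (n+1), n.choose (k+1) • (D^[k+1] a * D^[n + 1 - (k+1)] b)
        = ∑ k ∈ Finset.range n, n.choose (k+1) • (D^[k+1] a * D^[n + 1 - (k+1)] b) := by
      rw [Finset.sum_range_succ]
      simp [Nat.choose_succ_self]
    have h2 : ∀ k ∈ Finset.range (n+1),
        n.choose k • (D^[k+1] a * D^[n-k] b) = n.choose k • (D^[k+1] a * D^[n+1-(k+1)] b) := by
      intro k hk
      rw [Nat.succ_sub_succ]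
    rw [Finset.sum_congr rfl h2, ← h3]
    abel

/-- If `D` is a derivation on a commutative ring `R` of prime characteristic `p`,
then the `p`-fold composition `D^[p]` is again a derivation on `R`. -/
theorem stmt_0 {R : Type*} [CommRing R] (p : ℕ) [Fact p.Prime] [CharP R p]
    (D : R → R)
    (hadd : ∀ a b : R, D (a + b) = D a + D b)
    (hleib : ∀ a b : R, D (a * b) = a * D b + D a * b) :
    (∀ a b : R, D^[p] (a + b) = D^[p] a + D^[p] b) ∧
      (∀ a b : R, D^[p] (a * b) = a * D^[p] b + D^[p] a * b) := by
  have hp : p.Prime := Fact.out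
  have hA : ∀ (n : ℕ) (a b : R), D^[n] (a + b) = D^[n] a + D^[n] b := by
    intro n a b
    induction n with
    | zero => simp
    | succ n ih => simp only [Function.iterate_succ_apply', ih, hadd]
  refine ⟨hA p, ?_⟩
  intro a b
  obtain ⟨m, hm⟩ : ∃ m, p = m + 1 := ⟨p - 1, (Nat.succ_pred_eq_of_pos hp.pos).symm⟩
  rw [iter_leibniz D hadd hleib p a b, hm]
  rw [Finset.sum_range_succ, Nat.choose_self, one_smul, Nat.sub_self,
    Function.iterate_zero_apply]
  rw [Finset.sum_range_succ' (fun k => (m+1).choose k • (D^[k] a * D^[m + 1 - k] b)) m]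
  have hmid : ∀ k ∈ Finset.range m,
      (m+1).choose (k+1) • (D^[k+1] a * D^[m + 1 - (k+1)] b) = 0 := by
    intro k hk
    simp only [Finset.mem_range] at hk
    have hdvd : p ∣ (m+1).choose (k+1) :=
      hm ▸ hp.dvd_choose_self (by omega) (by omega)
    rw [nsmul_eq_mul, (CharP.cast_eq_zero_iff R p _).mpr hdvd, zero_mul]
  rw [Finset.sum_congr rfl hmid, Finset.sum_const_zero, zero_add,
    Nat.choose_zero_right, one_smul, Nat.sub_zero, Function.iterate_zero_apply]
end

section
/- If f : M → M is a D-skew derivation on an R-module M over a commutative ring R of prime characteristic p (i.e., f is additive and f(ax) = a f(x) + D(a)x for a derivation D on R), then the p-fold composition f^p is a D^p-skew derivation: f^p(ax) = a f^p(x) + D^p(a) x for all a ∈ R and x ∈ M. -/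
/-- If `f` is a `D`-skew derivation on an `R`-module `M`, `R` of prime characteristic
`p`, then the `p`-fold composition `f^[p]` is a `D^[p]`-skew derivation:
`f^[p] (a • x) = a • f^[p] x + D^[p] a • x`. -/
theorem stmt_8 {R : Type*} [CommRing R] (p : ℕ) [Fact p.Prime] [CharP R p]
    {M : Type*} [AddCommGroup M] [Module R M]
    (D : R → R)
    (hDadd : ∀ a b : R, D (a + b) = D a + D b)
    (hDleib : ∀ a b : R, D (a * b) = a * D b + D a * b)
    (f : M → M)
    (hfadd : ∀ x y : M, f (x + y) = f x + f y)
    (hf : ∀ (a : R) (x : M), f (a • x) = a • f x + D a • x) :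
    ∀ (a : R) (x : M), f^[p] (a • x) = a • f^[p] x + D^[p] a • x := by
  set F := AddMonoidHom.mk' f hfadd with hFdef
  have hFf : ∀ y, f y = F y := fun _ => rfl
  have key : ∀ (n : ℕ) (a : R) (x : M),
      f^[n] (a • x) = ∑ k ∈ Finset.range (n+1),
        n.choose k • (D^[k] a • f^[n-k] x) := by
    intro n
    induction n with
    | zero => intro a x; simp
    | succ n ih =>
      intro a x
      set t : ℕ → M := fun k => D^[k] a • f^[n+1-k] x with ht
      have step : ∀ k ∈ Finset.range (n+1),
          f (n.choose k • (D^[k] a • f^[n-k] x))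
            = n.choose k • t k + n.choose k • t (k+1) := by
        intro k hk
        have hkn : k ≤ n := Nat.lt_succ_iff.mp (Finset.mem_range.mp hk)
        have h1 : f (f^[n-k] x) = f^[n+1-k] x := by
          rw [← Function.iterate_succ_apply' f (n-k), Nat.succ_sub hkn]
        have h2 : D (D^[k] a) = D^[k+1] a :=
          (Function.iterate_succ_apply' D k a).symm
        rw [hFf, map_nsmul, ← hFf, hf, h1, h2, smul_add, ht]
        simp only [Nat.succ_sub_succ]
      rw [Function.iterate_succ_apply', ih a x, hFf, map_sum]
      simp_rw [← hFf]
      rw [Finset.sum_congr rfl step, Finset.sum_add_distrib]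
      show (∑ k ∈ Finset.range (n+1), n.choose k • t k)
          + (∑ k ∈ Finset.range (n+1), n.choose k • t (k+1))
          = ∑ k ∈ Finset.range (n+1+1), (n+1).choose k • t k
      have h3 : (∑ k ∈ Finset.range (n+1), n.choose (k+1) • t (k+1)) + t 0
          = ∑ k ∈ Finset.range (n+1), n.choose k • t k := by
        have := Finset.sum_range_succ' (fun k => n.choose k • t k) (n+1)
        rw [Finset.sum_range_succ (fun k => n.choose k • t k) (n+1)] at this
        simp only [Nat.choose_succ_self, zero_smul, add_zero, Nat.choose_zero_right,
          one_smul] at this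
        exact this.symm
      rw [Finset.sum_range_succ' (fun k => (n+1).choose k • t k) (n+1)]
      simp_rw [Nat.choose_succ_succ, add_nsmul]
      rw [Finset.sum_add_distrib, Nat.choose_zero_right, one_smul, add_assoc, h3]
      exact add_comm _ _
  intro a x
  have hp : p.Prime := Fact.out
  have hpz : ∀ m : M, p • m = 0 := fun m => by
    rw [← Nat.cast_smul_eq_nsmul R, CharP.cast_eq_zero R p, zero_smul]
  rw [key p a x, Finset.sum_range_succ]
  have hmid : ∑ k ∈ Finset.range p, p.choose k • (D^[k] a • f^[p-k] x)
      = a • f^[p] x := by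
    rw [Finset.sum_eq_single_of_mem 0 (Finset.mem_range.mpr hp.pos)]
    · simp
    · intro k hk hk0
      obtain ⟨c, hc⟩ := hp.dvd_choose_self hk0 (Finset.mem_range.mp hk)
      rw [hc, mul_nsmul', hpz]
  rw [hmid]
  simp
end

section
/- Let M = P ⊕ Q be a direct sum of R-modules, and let D be a derivation on R. If there exists an additive map f : M → M with f(ax) = a f(x) + D(a)x for all a ∈ R, x ∈ M, then there exists an additive map g : P → P with g(ax) = a g(x) + D(a)x for all a ∈ R, x ∈ P. Conversely, if both P and Q admit such D-skew derivations, then so does M. -/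
/-- Let `M = P × Q` (the direct sum of the `R`-modules `P` and `Q`) and `D` a
derivation on `R`. If `M` admits a `D`-skew derivation, then so does `P`; and
conversely, if both `P` and `Q` admit `D`-skew derivations, then so does `M`. -/
theorem stmt_9 {R : Type*} [CommRing R]
    {P Q : Type*} [AddCommGroup P] [Module R P] [AddCommGroup Q] [Module R Q]
    (D : R → R)
    (hDadd : ∀ a b : R, D (a + b) = D a + D b)
    (hDleib : ∀ a b : R, D (a * b) = a * D b + D a * b) :
    ((∃ f : P × Q → P × Q, (∀ x y, f (x + y) = f x + f y) ∧
        ∀ (a : R) (x : P × Q), f (a • x) = a • f x + D a • x) →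
      (∃ g : P → P, (∀ x y, g (x + y) = g x + g y) ∧
        ∀ (a : R) (x : P), g (a • x) = a • g x + D a • x)) ∧
    (((∃ g : P → P, (∀ x y, g (x + y) = g x + g y) ∧
        ∀ (a : R) (x : P), g (a • x) = a • g x + D a • x) ∧
      (∃ h : Q → Q, (∀ x y, h (x + y) = h x + h y) ∧
        ∀ (a : R) (x : Q), h (a • x) = a • h x + D a • x)) →
      (∃ f : P × Q → P × Q, (∀ x y, f (x + y) = f x + f y) ∧
        ∀ (a : R) (x : P × Q), f (a • x) = a • f x + D a • x)) := by
  constructor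
  · rintro ⟨f, hfadd, hfsmul⟩
    refine ⟨fun x => (f (x, 0)).1, ?_, ?_⟩
    · intro x y
      have : ((x + y : P), (0 : Q)) = (x, 0) + (y, 0) := by simp
      simp only []; rw [this, hfadd]; rfl
    · intro a x
      have : ((a • x : P), (0 : Q)) = a • ((x, 0) : P × Q) := by simp
      simp only []; rw [this, hfsmul]; rfl
  · rintro ⟨⟨g, hgadd, hgsmul⟩, ⟨h, hhadd, hhsmul⟩⟩
    refine ⟨fun x => (g x.1, h x.2), ?_, ?_⟩
    · intro x y
      simp [hgadd, hhadd, Prod.add_def]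
    · intro a x
      simp [hgsmul, hhsmul, Prod.smul_def, Prod.add_def]
end

section
/- Let k be a field, λ : ℤ^r → ℤ a linear form, and define for each n ∈ ℕ the k-linear map Hₙ on the polynomial ring k[x₁,...,x_r] by Hₙ(x^a) = C(λ(a), n)·x^a on monomials, where C(z,n) is the generalized binomial coefficient. Then the family (Hₙ) is a Hasse–Schmidt derivation: H₀ = id and Hₙ(fg) = ∑_{i=0}^{n} Hᵢ(f)·H_{n-i}(g) for all f, g and all n. -/
open MvPolynomial

/-- For a linear form `λ : ℤ^r → ℤ` (with `λ(eᵢ) = l i`) and the `k`-linear maps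
`Hₙ` on `k[x₁,…,x_r]` defined on monomials by `Hₙ(x^a) = C(λ(a), n) • x^a`
(generalized binomial coefficient, mapped into `k`), the family `(Hₙ)` is a
Hasse–Schmidt derivation: `H₀ = id` and `Hₙ(fg) = ∑_{i≤n} Hᵢ(f) H_{n-i}(g)`. -/
theorem stmt_13 {k : Type*} [Field k] (r : ℕ) (l : Fin r → ℤ)
    (H : ℕ → MvPolynomial (Fin r) k →ₗ[k] MvPolynomial (Fin r) k)
    (hH : ∀ (n : ℕ) (a : Fin r →₀ ℕ) (c : k),
      H n (monomial a c) =
        ((Ring.choose (∑ i : Fin r, l i * (a i : ℤ)) n : ℤ) : k) • monomial a c) :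
    H 0 = LinearMap.id ∧
      ∀ (f g : MvPolynomial (Fin r) k) (n : ℕ),
        H n (f * g) = ∑ i ∈ Finset.range (n + 1), H i f * H (n - i) g := by
  constructor
  · apply MvPolynomial.linearMap_ext
    intro s
    refine LinearMap.ext fun c => ?_
    simp [hH 0 s c, Ring.choose_zero_right]
  · intro f g n
    induction f using MvPolynomial.induction_on' with
    | add p q hp hq =>
      simp only [add_mul, map_add, hp, hq, ← Finset.sum_add_distrib]
    | monomial a c =>
      induction g using MvPolynomial.induction_on' with
      | add p q hp hq =>
        simp only [mul_add, map_add, hp, hq, ← Finset.sum_add_distrib]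
      | monomial b d =>
        rw [monomial_mul]
        simp only [hH]
        have hadd : (∑ i : Fin r, l i * (((a + b) i : ℕ) : ℤ))
            = (∑ i : Fin r, l i * (a i : ℤ)) + (∑ i : Fin r, l i * (b i : ℤ)) := by
          rw [← Finset.sum_add_distrib]
          refine Finset.sum_congr rfl fun i _ => ?_
          rw [Finsupp.add_apply]
          push_cast
          ring
        rw [hadd, Ring.add_choose_eq _ (Commute.all _ _),
          Finset.Nat.sum_antidiagonal_eq_sum_range_succ
            (fun x y => Ring.choose (∑ i : Fin r, l i * (a i : ℤ)) x *
              Ring.choose (∑ i : Fin r, l i * (b i : ℤ)) y)]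
        push_cast [Finset.sum_smul]
        refine Finset.sum_congr rfl fun i _ => ?_
        rw [smul_mul_smul_comm, monomial_mul]
end
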